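/- Let F, k_f, ρ be positive integers with k_f ≤ F/2 and ρ ≤ F/(2·k_f), let α ∈ [0,1], and define h_x as above for x ∈ {1,…,k_f}. Then h_x ≤ 1 − (ρ/F)·(1 − 2·ρ·α/F)^x. -/

import Mathlib

theorem stmt_3 (F kf ρ : ℕ) (hF : 0 < F) (hkf : 0 < kf) (hρ : 0 < ρ)
    (hkfF : (kf : ℝ) ≤ F / 2) (hρF : (ρ : ℝ) ≤ (F : ℝ) / (2 * kf))
    (α : ℝ) (hα0 : 0 ≤ α) (hα1 : α ≤ 1)
    (x : ℕ) (hx1 : 1 ≤ x) (hxkf : x ≤ kf) :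
    ∑ ℓ ∈ Finset.range (x + 1),
      (x.choose ℓ : ℝ) * α ^ ℓ * (1 - α) ^ (x - ℓ) *
        (1 - ((F - ℓ - 1).choose (ρ - 1) : ℝ) / (F.choose ρ : ℝ))
      ≤ 1 - ((ρ : ℝ) / F) * (1 - 2 * ρ * α / F) ^ x := by
  -- basic nat facts
  have hFR : (0:ℝ) < F := by exact_mod_cast hF
  have h2kf : 2 * kf ≤ F := by
    have : (2 * kf : ℝ) ≤ F := by push_cast; linarith
    exact_mod_cast this
  have h2ρkf : 2 * ρ * kf ≤ F := by
    have hkfR : (0:ℝ) < (2 * kf : ℕ) := by positivity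
    have h1 : (ρ : ℝ) * (2 * kf : ℕ) ≤ F := by
      rw [← le_div_iff₀ hkfR]; push_cast; push_cast at hρF; linarith
    have : (2 * ρ * kf : ℝ) ≤ F := by push_cast at h1 ⊢; linarith
    exact_mod_cast this
  have h2ρ : 2 * ρ ≤ F := le_trans (by nlinarith) h2ρkf
  have hρleF : ρ ≤ F := by omega
  have hC : 0 < F.choose ρ := Nat.choose_pos hρleF
  have hCR : (0:ℝ) < (F.choose ρ : ℝ) := by exact_mod_cast hC
  set β : ℝ := 1 - 2 * ρ / F with hβ
  have hβ0 : 0 ≤ β := by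
    rw [hβ]
    have : (2 * ρ : ℝ) ≤ F := by exact_mod_cast h2ρ
    rw [sub_nonneg, div_le_one hFR]
    linarith
  -- key lemma
  have key : ∀ ℓ, ℓ ≤ kf → (ρ:ℝ)/F * β^ℓ ≤ ((F - ℓ - 1).choose (ρ-1) : ℝ) / (F.choose ρ : ℝ) := by
    intro ℓ
    induction ℓ with
    | zero =>
      intro _
      have hid : F * (F-1).choose (ρ-1) = F.choose ρ * ρ := by
        have h := Nat.add_one_mul_choose_eq (F-1) (ρ-1)
        rw [show F - 1 + 1 = F by omega, show ρ - 1 + 1 = ρ by omega] at h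
        exact h
      have hidR : (F:ℝ) * ((F-1).choose (ρ-1) : ℝ) = (F.choose ρ : ℝ) * ρ := by
        exact_mod_cast hid
      simp only [Nat.sub_zero, pow_zero, mul_one]
      rw [div_le_div_iff₀ hFR hCR]
      linarith
    | succ n ih =>
      intro hn
      have ihv := ih (by omega)
      -- a = F - n - 1
      have ha2 : F ≤ 2 * (F - n - 1) := by omega
      have haρ : ρ ≤ F - n - 1 := by omega
      have ha1 : 1 ≤ F - n - 1 := by omega
      have hid : (F - n - 2).choose (ρ-1) * (F - n - 1) =
          (F - n - 1).choose (ρ-1) * (F - n - ρ) := by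
        have h := Nat.choose_mul_succ_eq (F - n - 2) (ρ-1)
        rw [show F - n - 2 + 1 = F - n - 1 by omega] at h
        rw [show F - n - 1 - (ρ - 1) = F - n - ρ by omega] at h
        exact h
      have haR : (0:ℝ) < ((F - n - 1 : ℕ) : ℝ) := by exact_mod_cast ha1
      have hidR : ((F - n - 2).choose (ρ-1) : ℝ) * ((F - n - 1 : ℕ):ℝ) =
          ((F - n - 1).choose (ρ-1) : ℝ) * ((F - n - ρ : ℕ):ℝ) := by exact_mod_cast hid
      -- ratio bound : β ≤ (F-n-ρ)/(F-n-1)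
      have hsub : ((F - n - ρ : ℕ) : ℝ) = ((F - n - 1 : ℕ):ℝ) - (ρ - 1) := by
        have : F - n - ρ + (ρ - 1) = F - n - 1 := by omega
        have := congrArg (Nat.cast : ℕ → ℝ) this
        push_cast [hρ] at this ⊢
        linarith
      have hratio : β ≤ ((F - n - ρ : ℕ):ℝ) / ((F - n - 1 : ℕ):ℝ) := by
        have h2aR : (F:ℝ) ≤ 2 * ((F - n - 1 : ℕ):ℝ) := by exact_mod_cast ha2
        have hρR : (1:ℝ) ≤ ρ := by exact_mod_cast hρ
        rw [hβ, hsub, le_div_iff₀ haR]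
        have h2 : ((ρ:ℝ) - 1) ≤ 2 * ρ * ((F - n - 1 : ℕ):ℝ) / F := by
          rw [le_div_iff₀ hFR]; nlinarith
        have h3 : (1 - 2 * (ρ:ℝ) / F) * ((F - n - 1 : ℕ):ℝ)
            = ((F - n - 1 : ℕ):ℝ) - 2 * ρ * ((F - n - 1 : ℕ):ℝ) / F := by ring
        linarith
      have hq : ((F - (n+1) - 1).choose (ρ-1) : ℝ) / (F.choose ρ : ℝ) =
          ((F - n - 1).choose (ρ-1) : ℝ) / (F.choose ρ : ℝ) *
            (((F - n - ρ : ℕ):ℝ) / ((F - n - 1 : ℕ):ℝ)) := by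
        have e3 : F - (n+1) - 1 = F - n - 2 := by omega
        rw [e3]
        field_simp
        linear_combination hidR
      rw [hq, pow_succ]
      have hqnn : (0:ℝ) ≤ ((F - n - 1).choose (ρ-1) : ℝ) / (F.choose ρ : ℝ) := by positivity
      calc (ρ:ℝ)/F * (β^n * β) = ((ρ:ℝ)/F * β^n) * β := by ring
        _ ≤ (((F - n - 1).choose (ρ-1) : ℝ) / (F.choose ρ : ℝ)) * β :=
            mul_le_mul_of_nonneg_right ihv hβ0
        _ ≤ _ := mul_le_mul_of_nonneg_left hratio hqnn
  -- now the sum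
  have hsplit : ∑ ℓ ∈ Finset.range (x + 1),
      (x.choose ℓ : ℝ) * α ^ ℓ * (1 - α) ^ (x - ℓ) *
        (1 - ((F - ℓ - 1).choose (ρ - 1) : ℝ) / (F.choose ρ : ℝ))
      = (∑ ℓ ∈ Finset.range (x + 1), (x.choose ℓ : ℝ) * α ^ ℓ * (1 - α) ^ (x - ℓ))
        - ∑ ℓ ∈ Finset.range (x + 1), (x.choose ℓ : ℝ) * α ^ ℓ * (1 - α) ^ (x - ℓ) *
            (((F - ℓ - 1).choose (ρ - 1) : ℝ) / (F.choose ρ : ℝ)) := by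
    rw [← Finset.sum_sub_distrib]
    exact Finset.sum_congr rfl (fun ℓ _ => by ring)
  rw [hsplit]
  have hsum1 : ∑ ℓ ∈ Finset.range (x + 1), (x.choose ℓ : ℝ) * α ^ ℓ * (1 - α) ^ (x - ℓ) = 1 := by
    calc ∑ ℓ ∈ Finset.range (x + 1), (x.choose ℓ : ℝ) * α ^ ℓ * (1 - α) ^ (x - ℓ)
        = ∑ ℓ ∈ Finset.range (x + 1), α ^ ℓ * (1 - α) ^ (x - ℓ) * (x.choose ℓ : ℝ) :=
          Finset.sum_congr rfl (fun ℓ _ => by ring)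
      _ = (α + (1 - α)) ^ x := (add_pow α (1-α) x).symm
      _ = 1 := by rw [show α + (1-α) = (1:ℝ) by ring, one_pow]
  rw [hsum1]
  have hsum2 : ((ρ:ℝ)/F) * (1 - 2 * ρ * α / F) ^ x ≤
      ∑ ℓ ∈ Finset.range (x + 1), (x.choose ℓ : ℝ) * α ^ ℓ * (1 - α) ^ (x - ℓ) *
        (((F - ℓ - 1).choose (ρ - 1) : ℝ) / (F.choose ρ : ℝ)) := by
    have hbase : 1 - 2 * (ρ:ℝ) * α / F = α * β + (1 - α) := by
      rw [hβ]; field_simp; ring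
    have hbin : (α * β + (1 - α)) ^ x =
        ∑ ℓ ∈ Finset.range (x + 1), (α*β) ^ ℓ * (1 - α) ^ (x - ℓ) * (x.choose ℓ : ℝ) :=
      add_pow (α*β) (1-α) x
    rw [hbase, hbin, Finset.mul_sum]
    apply Finset.sum_le_sum
    intro ℓ hℓ
    have hℓkf : ℓ ≤ kf := by
      simp only [Finset.mem_range] at hℓ; omega
    have h1α : (0:ℝ) ≤ 1 - α := by linarith
    have hnn : (0:ℝ) ≤ (x.choose ℓ : ℝ) * α ^ ℓ * (1 - α) ^ (x - ℓ) :=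
      mul_nonneg (mul_nonneg (by positivity) (by positivity)) (pow_nonneg h1α _)
    calc (ρ:ℝ)/F * ((α*β) ^ ℓ * (1 - α) ^ (x - ℓ) * (x.choose ℓ : ℝ))
        = ((x.choose ℓ : ℝ) * α ^ ℓ * (1 - α) ^ (x - ℓ)) * ((ρ:ℝ)/F * β^ℓ) := by
          rw [mul_pow]; ring
      _ ≤ ((x.choose ℓ : ℝ) * α ^ ℓ * (1 - α) ^ (x - ℓ)) *
            (((F - ℓ - 1).choose (ρ-1) : ℝ) / (F.choose ρ : ℝ)) :=
          mul_le_mul_of_nonneg_left (key ℓ hℓkf) hnn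
  linarith
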